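/- For all integers m ≥ 3 and ℓ ≥ 1, one has (m² − 2m + ℓ + 2)·C(m+ℓ−1, ℓ) > (ℓ+1)·(m² + (ℓ−2)·m − (ℓ−2)). -/

import Mathlib

/-- Key polynomial inequality for the inductive step. -/
lemma aux_poly (M L : ℤ) (hm : 3 ≤ M) (hl : 1 ≤ L) :
    (L + 2) * (M ^ 2 + (L - 1) * M - (L - 1)) ≤
      (M + L) * (M ^ 2 + (L - 2) * M - (L - 2)) := by
  nlinarith [sq_nonneg (M - 3), sq_nonneg (L - 1), mul_nonneg (sub_nonneg.2 hm) (sub_nonneg.2 hl),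
    mul_nonneg (mul_nonneg (sub_nonneg.2 hm) (sub_nonneg.2 hl)) (sub_nonneg.2 hl),
    mul_nonneg (mul_nonneg (sub_nonneg.2 hm) (sub_nonneg.2 hm)) (sub_nonneg.2 hl)]

/-- **Lemma 3.5.** For all integers `m ≥ 3` and `ℓ ≥ 1`,
`(m² − 2m + ℓ + 2)·C(m+ℓ−1, ℓ) > (ℓ+1)·(m² + (ℓ−2)·m − (ℓ−2))`. -/
theorem stmt_0 (m ℓ : ℕ) (hm : 3 ≤ m) (hℓ : 1 ≤ ℓ) :
    ((m : ℤ) ^ 2 - 2 * (m : ℤ) + (ℓ : ℤ) + 2) * (Nat.choose (m + ℓ - 1) ℓ : ℤ) >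
      ((ℓ : ℤ) + 1) * ((m : ℤ) ^ 2 + ((ℓ : ℤ) - 2) * (m : ℤ) - ((ℓ : ℤ) - 2)) := by
  induction ℓ, hℓ using Nat.le_induction with
  | base =>
      have h1 : m + 1 - 1 = m := by omega
      rw [h1, Nat.choose_one_right]
      have hM : (3 : ℤ) ≤ (m : ℤ) := by exact_mod_cast hm
      push_cast
      nlinarith [mul_nonneg (mul_nonneg (sub_nonneg.2 hM) (sub_nonneg.2 hM)) (sub_nonneg.2 hM),
        sq_nonneg ((m : ℤ) - 1), sq_nonneg ((m : ℤ) - 3)]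
  | succ ℓ hℓ IH =>
      have hM : (3 : ℤ) ≤ (m : ℤ) := by exact_mod_cast hm
      have hL : (1 : ℤ) ≤ (ℓ : ℤ) := by exact_mod_cast hℓ
      set C : ℕ := Nat.choose (m + ℓ - 1) ℓ with hCdef
      set C' : ℕ := Nat.choose (m + (ℓ + 1) - 1) (ℓ + 1) with hC'def
      have hkey : (ℓ + 1) * C' = (m + ℓ) * C := by
        have := Nat.add_one_mul_choose_eq (m + ℓ - 1) ℓ
        have h2 : m + ℓ - 1 + 1 = m + ℓ := by omega
        have h3 : m + (ℓ + 1) - 1 = m + ℓ := by omega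
        rw [h2] at this
        rw [hC'def, h3, mul_comm, ← this]
      have hkeyZ : ((ℓ : ℤ) + 1) * (C' : ℤ) = ((m : ℤ) + ℓ) * (C : ℤ) := by
        exact_mod_cast hkey
      have hCpos : (1 : ℤ) ≤ (C : ℤ) := by
        have : 0 < C := Nat.choose_pos (by omega)
        exact_mod_cast this
      have hpoly := aux_poly (m : ℤ) (ℓ : ℤ) hM hL
      have hLpos : (0 : ℤ) < (ℓ : ℤ) + 1 := by linarith
      rw [gt_iff_lt, ← mul_lt_mul_iff_right₀ hLpos]
      push_cast
      nlinarith [mul_le_mul_of_nonneg_right hpoly (by linarith : (0:ℤ) ≤ (ℓ:ℤ) + 1),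
        mul_lt_mul_of_pos_right IH (by linarith : (0:ℤ) < (m:ℤ) + ℓ),
        hkeyZ, hCpos, hM, hL]
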